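/- For every α ∈ (0,1), every n ≥ 1 and every configuration w ∈ W_{2n}, one has φ_α(w) = (1+n)^α if and only if E(w) = 0, i.e., if and only if w is one of the two perfectly alternating configurations (12)^n or (21)^n. -/

import Mathlib

open scoped BigOperators ENNReal

attribute [local instance] Classical.propDecidable

namespace Cooling

/-- Words over the alphabet `{1,2}`, modeled as lists of booleans:
`true` encodes the letter `1`, `false` encodes the letter `2`. -/
abbrev Word := List Bool

/-- `w` is a configuration of length `2*n`: a word of length `2*n` with as many
occurrences of the letter `1` (`true`) as of the letter `2` (`false`). -/
def IsConfig (n : ℕ) (w : Word) : Prop :=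
  w.length = 2 * n ∧ w.count true = n

/-- The (finite) set `W_{2n}` of all configurations of length `2*n`. -/
def configSet (n : ℕ) : Finset Word :=
  ((Finset.univ : Finset (Fin (2 * n) → Bool)).image List.ofFn).filter
    (fun w => w.count true = n)

/-- The number `E(w)` of mismatches of `w`: positions `i` with `w_i = w_{i+1}`. -/
def mismatches (w : Word) : ℕ :=
  (w.zip w.tail).countP (fun p => p.1 == p.2)

/-- The number `F(w)` of flips performable on `w`: positions `i` with `w_i ≠ w_{i+1}`. -/
def flipCount (w : Word) : ℕ :=
  (w.zip w.tail).countP (fun p => p.1 != p.2)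

/-- The word `w^{(i)}` obtained from `w` by exchanging the letters at positions
`i` and `i+1` (0-indexed). -/
def flip (w : Word) (i : ℕ) : Word :=
  (w.set i (w.getD (i + 1) true)).set (i + 1) (w.getD i true)

/-- A flip is permitted at position `i` if both positions `i` and `i+1` exist and the
corresponding letters are different. -/
def CanFlip (w : Word) (i : ℕ) : Prop :=
  i + 1 < w.length ∧ w.getD i true ≠ w.getD (i + 1) true

/-- The set of positions at which a flip is allowed in the cooling process:
positions of permitted flips which do not increase the number of mismatches. -/
noncomputable def allowedFlips (w : Word) : Finset ℕ :=
  (Finset.range w.length).filter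
    (fun i => CanFlip w i ∧ mismatches (flip w i) ≤ mismatches w)

/-- One step of the cooling process: if `E(w) = 0`, stay at `w`; otherwise, perform
a flip chosen uniformly at random among the flips which do not increase the number
of mismatches. -/
noncomputable def coolStep (w : Word) : PMF Word :=
  if h : mismatches w ≠ 0 ∧ (allowedFlips w).Nonempty then
    (PMF.uniformOfFinset (allowedFlips w) h.2).map (flip w)
  else
    PMF.pure w

/-- The distribution of the cooling process at time `t`, started from `w`. -/
noncomputable def coolDist (w : Word) : ℕ → PMF Word
  | 0 => PMF.pure w
  | t + 1 => (coolDist w t).bind coolStep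

/-- The expected convergence time `E[T | w₀ = w]` of the cooling process started at `w`,
where `T = min {t ≥ 0 : E(w_t) = 0}`.  Since mismatch-free configurations are absorbing,
`E[T] = ∑_{t ≥ 0} P(T > t) = ∑_{t ≥ 0} P(E(w_t) ≠ 0)`. -/
noncomputable def expConvTime (w : Word) : ℝ≥0∞ :=
  ∑' t : ℕ, (coolDist w t).toOuterMeasure {v | mismatches v ≠ 0}

/-- The factor of `w` starting at position `s` (0-indexed) of length `l`. -/
def factor (w : Word) (s l : ℕ) : Word := (w.drop s).take l

/-- The height `|p|₁ - |p|₂` of the length-`s` prefix `p` of `w`. -/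
def height (w : Word) (s : ℕ) : ℤ :=
  ((w.take s).count true : ℤ) - (w.take s).count false

/-- The occurrence `(s, l)` is a positive Dyck factor of `w`. -/
def IsPosDyckAt (w : Word) (s l : ℕ) : Prop :=
  0 < l ∧ s + l ≤ w.length ∧
  (factor w s l).count true = (factor w s l).count false ∧
  (∀ i ≤ l, ((factor w s l).take i).count false ≤ ((factor w s l).take i).count true) ∧
  0 ≤ height w s

/-- The occurrence `(s, l)` is a negative Dyck factor of `w`. -/
def IsNegDyckAt (w : Word) (s l : ℕ) : Prop :=
  0 < l ∧ s + l ≤ w.length ∧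
  (factor w s l).count true = (factor w s l).count false ∧
  (∀ i ≤ l, ((factor w s l).take i).count true ≤ ((factor w s l).take i).count false) ∧
  height w s ≤ 0

/-- The occurrence `(s, l)` is a Dyck factor of `w` (positive or negative). -/
def IsDyckAt (w : Word) (s l : ℕ) : Prop :=
  IsPosDyckAt w s l ∨ IsNegDyckAt w s l

/-- The occurrence `(s, l)` is a maximal Dyck factor of `w`: no Dyck factor of `w`
with the same height contains it (other than itself). -/
def IsMaxDyckAt (w : Word) (s l : ℕ) : Prop :=
  IsDyckAt w s l ∧
  ∀ s' l', IsDyckAt w s' l' → height w s' = height w s → s' ≤ s → s + l ≤ s' + l' →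
    s' = s ∧ l' = l

/-- The set `DF(w)` of (occurrences of) maximal Dyck factors of `w`,
encoded as pairs (starting position, length). -/
noncomputable def DF (w : Word) : Finset (ℕ × ℕ) :=
  ((Finset.range (w.length + 1)) ×ˢ (Finset.range (w.length + 1))).filter
    (fun sl => IsMaxDyckAt w sl.1 sl.2)

/-- The variant `φ_α(w) = ∑_{v ∈ DF(w)} (1 + |v|₁)^α`. -/
noncomputable def phi (α : ℝ) (w : Word) : ℝ :=
  ∑ sl ∈ DF w, (1 + ((factor w sl.1 sl.2).count true : ℝ)) ^ α

/-- The volume `V(w) = (1/2) ∑_{k=1}^{|w|} |h_{k-1}(w) + h_k(w)|`: the area between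
the broken-line representation of `w` and the horizontal axis. -/
noncomputable def volume (w : Word) : ℝ :=
  (1 / 2) * ∑ k ∈ Finset.range w.length, |((height w k + height w (k + 1) : ℤ) : ℝ)|

lemma count_tf (v : Word) : v.count true + v.count false = v.length := by
  induction v with
  | nil => simp
  | cons a l ih => cases a <;> simp [List.count_cons] <;> omega

lemma height_zero (w : Word) : height w 0 = 0 := by simp [height]

lemma height_step (w : Word) (k : ℕ) (hk : k < w.length) :
    height w (k+1) = height w k + (if w.getD k true then 1 else -1) := by
  have h1 : w.take (k+1) = w.take k ++ (w[k]?).toList := List.take_succ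
  have h2 : w[k]? = some w[k] := List.getElem?_eq_getElem hk
  have h3 : w.getD k true = w[k] := by
    simp [List.getD_eq_getElem?_getD, h2]
  rw [h3]
  rw [h2] at h1
  cases h : w[k] <;>
    simp [height, h1, List.count_append, h] <;> push_cast <;> ring

lemma count_take_factor (w : Word) (b : Bool) (s i : ℕ) :
    (w.take (s + i)).count b = (w.take s).count b + ((w.drop s).take i).count b := by
  rw [List.take_add, List.count_append]

lemma factor_take (w : Word) (s l i : ℕ) (h : i ≤ l) :
    (factor w s l).take i = (w.drop s).take i := by
  simp [factor, List.take_take, Nat.min_eq_left h]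

lemma factor_count_eq (w : Word) (b : Bool) (s l i : ℕ) (h : i ≤ l) :
    ((factor w s l).take i).count b
      = (w.take (s+i)).count b - (w.take s).count b := by
  rw [factor_take w s l i h, count_take_factor w b s i]; omega

lemma prefix_count_iff (w : Word) (s i : ℕ) :
    (((w.drop s).take i).count false ≤ ((w.drop s).take i).count true)
      ↔ height w s ≤ height w (s+i) := by
  have ht := count_take_factor w true s i
  have hf := count_take_factor w false s i
  simp only [height]
  omega

lemma prefix_count_iff' (w : Word) (s i : ℕ) :
    (((w.drop s).take i).count true ≤ ((w.drop s).take i).count false)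
      ↔ height w (s+i) ≤ height w s := by
  have ht := count_take_factor w true s i
  have hf := count_take_factor w false s i
  simp only [height]
  omega

lemma balance_iff (w : Word) (s l : ℕ) :
    ((factor w s l).count true = (factor w s l).count false)
      ↔ height w (s+l) = height w s := by
  have hffull : factor w s l = (w.drop s).take l := rfl
  have ht := count_take_factor w true s l
  have hf := count_take_factor w false s l
  rw [hffull]
  simp only [height]
  omega

lemma isPosDyckAt_iff (w : Word) (s l : ℕ) :
    IsPosDyckAt w s l ↔ 0 < l ∧ s + l ≤ w.length ∧ height w (s+l) = height w s ∧
      (∀ i ≤ l, height w s ≤ height w (s+i)) ∧ 0 ≤ height w s := by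
  unfold IsPosDyckAt
  rw [balance_iff]
  refine and_congr_right fun _ => and_congr_right fun _ => and_congr_right fun _ => 
    and_congr_left fun _ => forall₂_congr fun i hi => ?_
  rw [factor_take w s l i hi]
  exact prefix_count_iff w s i

lemma isNegDyckAt_iff (w : Word) (s l : ℕ) :
    IsNegDyckAt w s l ↔ 0 < l ∧ s + l ≤ w.length ∧ height w (s+l) = height w s ∧
      (∀ i ≤ l, height w (s+i) ≤ height w s) ∧ height w s ≤ 0 := by
  unfold IsNegDyckAt
  rw [balance_iff]
  refine and_congr_right fun _ => and_congr_right fun _ => and_congr_right fun _ => 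
    and_congr_left fun _ => forall₂_congr fun i hi => ?_
  rw [factor_take w s l i hi]
  exact prefix_count_iff' w s i

lemma exists_first_eq (f : ℕ → ℤ) (b : ℕ) (t : ℤ) :
    ∀ a, a ≤ b → (∀ k, a ≤ k → k < b → f (k+1) = f k + 1 ∨ f (k+1) = f k - 1) →
    t < f a → f b ≤ t →
    ∃ e, a < e ∧ e ≤ b ∧ f e = t ∧ ∀ k, a ≤ k → k < e → t < f k := by
  intro a
  obtain ⟨n, hn⟩ : ∃ n, b - a = n := ⟨_, rfl⟩
  induction n generalizing a with
  | zero =>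
    intro hab _ ha hb
    have : a = b := by omega
    subst this; omega
  | succ n ih =>
    intro hab step ha hb
    have hab' : a < b := by
      rcases eq_or_lt_of_le hab with h | h
      · subst h; omega
      · exact h
    by_cases hc : f (a+1) ≤ t
    · have he : f (a+1) = t := by
        rcases step a (le_refl a) hab' with h | h <;> omega
      refine ⟨a+1, by omega, by omega, he, fun k hk1 hk2 => ?_⟩
      have : k = a := by omega
      rw [this]; exact ha
    · push_neg at hc
      obtain ⟨e, he1, he2, he3, he4⟩ :=
        ih (a+1) (by omega) (by omega) (fun k hk1 hk2 => step k (by omega) hk2) hc hb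
      refine ⟨e, by omega, he2, he3, fun k hk1 hk2 => ?_⟩
      rcases eq_or_lt_of_le hk1 with h | h
      · rw [← h]; exact ha
      · exact he4 k (by omega) hk2

lemma exists_last_eq (f : ℕ → ℤ) (a : ℕ) (t : ℤ) :
    ∀ b, a ≤ b → (∀ k, a ≤ k → k < b → f (k+1) = f k + 1 ∨ f (k+1) = f k - 1) →
    t ≤ f a → f b < t →
    ∃ s, a ≤ s ∧ s < b ∧ f s = t ∧ ∀ k, s < k → k ≤ b → f k < t := by
  intro b
  obtain ⟨n, hn⟩ : ∃ n, b - a = n := ⟨_, rfl⟩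
  induction n generalizing b with
  | zero =>
    intro hab _ ha hb
    have : a = b := by omega
    subst this; omega
  | succ n ih =>
    intro hab step ha hb
    have hab' : a < b := by
      rcases eq_or_lt_of_le hab with h | h
      · subst h; omega
      · exact h
    obtain ⟨c, rfl⟩ : ∃ c, b = c + 1 := ⟨b - 1, by omega⟩
    by_cases hc : t ≤ f c
    · have he : f c = t := by
        rcases step c (by omega) (by omega) with h | h <;> omega
      refine ⟨c, by omega, by omega, he, fun k hk1 hk2 => ?_⟩
      have : k = c + 1 := by omega
      rw [this]; exact hb
    · push_neg at hc
      obtain ⟨s, hs1, hs2, hs3, hs4⟩ :=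
        ih c (by omega) (by omega) (fun k hk1 hk2 => step k hk1 (by omega)) ha hc
      refine ⟨s, hs1, by omega, hs3, fun k hk1 hk2 => ?_⟩
      rcases eq_or_lt_of_le hk2 with h | h
      · rw [h]; exact hb
      · exact hs4 k hk1 (by omega)

lemma height_steps (w : Word) : ∀ k, 0 ≤ k → k < w.length →
    height w (k+1) = height w k + 1 ∨ height w (k+1) = height w k - 1 := by
  intro k _ hk
  rw [height_step w k hk]
  cases w.getD k true <;> simp <;> omega

lemma height_step_true (w : Word) (j : ℕ) (hj : j < w.length)
    (hT : w.getD j true = true) : height w (j+1) = height w j + 1 := by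
  rw [height_step w j hj, hT]; simp

lemma height_step_false (w : Word) (j : ℕ) (hj : j < w.length)
    (hT : w.getD j true = false) : height w (j+1) = height w j - 1 := by
  rw [height_step w j hj, hT]; simp; ring

lemma posCover_true (w : Word) (j : ℕ) (hj : j < w.length)
    (hT : w.getD j true = true) (hh : 0 ≤ height w j)
    (hlen : height w w.length = 0) :
    ∃ l, IsPosDyckAt w j l ∧ 0 < l ∧ j + l ≤ w.length := by
  have hstep := height_step_true w j hj hT
  obtain ⟨e, he1, he2, he3, he4⟩ := exists_first_eq (height w) w.length (height w j)
    (j+1) (by omega) (fun k hk1 hk2 => height_steps w k (by omega) hk2)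
    (by omega) (by omega)
  refine ⟨e - j, ?_, by omega, by omega⟩
  rw [isPosDyckAt_iff]
  refine ⟨by omega, by omega, ?_, ?_, hh⟩
  · have : j + (e - j) = e := by omega
    rw [this, he3]
  · intro i hi
    rcases Nat.eq_zero_or_pos i with h0 | h0
    · subst h0; simp
    · rcases eq_or_lt_of_le (show j + i ≤ e by omega) with h | h
      · rw [h, he3]
      · exact le_of_lt (he4 (j+i) (by omega) h)

lemma negCover_false (w : Word) (j : ℕ) (hj : j < w.length)
    (hT : w.getD j true = false) (hh : height w j ≤ 0)
    (hlen : height w w.length = 0) :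
    ∃ l, IsNegDyckAt w j l ∧ 0 < l ∧ j + l ≤ w.length := by
  have hstep := height_step_false w j hj hT
  obtain ⟨e, he1, he2, he3, he4⟩ := exists_first_eq (fun k => -(height w k)) w.length
    (-(height w j)) (j+1) (by omega)
    (fun k hk1 hk2 => by rcases height_steps w k (by omega) hk2 with h | h <;> simp [h] <;> omega)
    (by simp; omega) (by simp [hlen]; omega)
  simp only [neg_inj, neg_le, neg_lt] at he3 he4
  refine ⟨e - j, ?_, by omega, by omega⟩
  rw [isNegDyckAt_iff]
  refine ⟨by omega, by omega, ?_, ?_, hh⟩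
  · have : j + (e - j) = e := by omega
    rw [this, he3]
  · intro i hi
    rcases Nat.eq_zero_or_pos i with h0 | h0
    · subst h0; simp
    · rcases eq_or_lt_of_le (show j + i ≤ e by omega) with h | h
      · rw [h, he3]
      · have := he4 (j+i) (by omega) h
        omega

lemma negCover_true (w : Word) (j : ℕ) (hj : j < w.length)
    (hT : w.getD j true = true) (hh : height w j < 0) :
    ∃ s l, IsNegDyckAt w s l ∧ s ≤ j ∧ j < s + l ∧
      height w s = height w j + 1 := by
  have hstep := height_step_true w j hj hT
  obtain ⟨s, hs1, hs2, hs3, hs4⟩ := exists_last_eq (height w) 0 (height w j + 1)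
    j (by omega) (fun k hk1 hk2 => height_steps w k hk1 (by omega))
    (by rw [height_zero]; omega) (by omega)
  refine ⟨s, j + 1 - s, ?_, by omega, by omega, hs3⟩
  rw [isNegDyckAt_iff]
  refine ⟨by omega, by omega, ?_, ?_, by omega⟩
  · have : s + (j + 1 - s) = j + 1 := by omega
    rw [this]; omega
  · intro i hi
    rcases Nat.eq_zero_or_pos i with h0 | h0
    · subst h0; simp
    · rcases eq_or_lt_of_le (show s + i ≤ j + 1 by omega) with h | h
      · rw [h]; omega
      · have := hs4 (s+i) (by omega) (by omega)
        omega

lemma posCover_false (w : Word) (j : ℕ) (hj : j < w.length)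
    (hT : w.getD j true = false) (hh : 0 < height w j) :
    ∃ s l, IsPosDyckAt w s l ∧ s ≤ j ∧ j < s + l ∧
      height w s = height w j - 1 := by
  have hstep := height_step_false w j hj hT
  obtain ⟨s, hs1, hs2, hs3, hs4⟩ := exists_last_eq (fun k => -(height w k)) 0
    (-(height w j - 1)) j (by omega)
    (fun k hk1 hk2 => by rcases height_steps w k hk1 (by omega) with h | h <;> simp [h] <;> omega)
    (by simp only [height_zero, neg_zero]; omega) (by omega)
  simp only [neg_inj, neg_le, neg_lt, neg_eq_iff_eq_neg] at hs3 hs4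
  have hs3' : height w s = height w j - 1 := by omega
  refine ⟨s, j + 1 - s, ?_, by omega, by omega, hs3'⟩
  rw [isPosDyckAt_iff]
  refine ⟨by omega, by omega, ?_, ?_, by omega⟩
  · have : s + (j + 1 - s) = j + 1 := by omega
    rw [this]; omega
  · intro i hi
    rcases Nat.eq_zero_or_pos i with h0 | h0
    · subst h0; simp
    · rcases eq_or_lt_of_le (show s + i ≤ j + 1 by omega) with h | h
      · rw [h]; omega
      · have := hs4 (s+i) (by omega) (by omega)
        omega

lemma dyck_bounds (w : Word) (s l : ℕ) (h : IsDyckAt w s l) :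
    0 < l ∧ s + l ≤ w.length := by
  rcases h with h | h
  · exact ⟨h.1, h.2.1⟩
  · exact ⟨h.1, h.2.1⟩

lemma mem_DF (w : Word) (s l : ℕ) (h : IsMaxDyckAt w s l) : (s, l) ∈ DF w := by
  obtain ⟨hl, hsl⟩ := dyck_bounds w s l h.1
  simp only [DF, Finset.mem_filter, Finset.mem_product, Finset.mem_range]
  exact ⟨⟨by omega, by omega⟩, h⟩

lemma extend_maximal (w : Word) (s l : ℕ) (hd : IsDyckAt w s l) :
    ∃ s' l', IsMaxDyckAt w s' l' ∧ s' ≤ s ∧ s + l ≤ s' + l' ∧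
      height w s' = height w s := by
  classical
  set S : Finset (ℕ × ℕ) :=
    ((Finset.range (w.length + 1)) ×ˢ (Finset.range (w.length + 1))).filter
      (fun p => IsDyckAt w p.1 p.2 ∧ height w p.1 = height w s ∧ p.1 ≤ s ∧
        s + l ≤ p.1 + p.2) with hS
  have memS : ∀ p : ℕ × ℕ, p ∈ S ↔ IsDyckAt w p.1 p.2 ∧ height w p.1 = height w s ∧
      p.1 ≤ s ∧ s + l ≤ p.1 + p.2 := by
    intro p
    simp only [hS, Finset.mem_filter, Finset.mem_product, Finset.mem_range]
    constructor
    · rintro ⟨_, h⟩; exact h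
    · intro h
      obtain ⟨_, hb⟩ := dyck_bounds w p.1 p.2 h.1
      exact ⟨⟨by omega, by omega⟩, h⟩
  have hslS : (s, l) ∈ S := (memS (s,l)).mpr ⟨hd, rfl, le_refl _, le_refl _⟩
  have hne : (S.image Prod.fst).Nonempty := ⟨s, Finset.mem_image_of_mem _ hslS⟩
  set s₀ := (S.image Prod.fst).min' hne with hs₀
  obtain ⟨p₀, hp₀S, hp₀1⟩ : ∃ p ∈ S, p.1 = s₀ := by
    have := (S.image Prod.fst).min'_mem hne
    rw [← hs₀, Finset.mem_image] at this
    obtain ⟨p, hp, hpe⟩ := this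
    exact ⟨p, hp, hpe⟩
  set T := S.filter (fun p => p.1 = s₀) with hT
  have hTne : (T.image Prod.snd).Nonempty :=
    ⟨p₀.2, Finset.mem_image_of_mem _ (Finset.mem_filter.mpr ⟨hp₀S, hp₀1⟩)⟩
  set l₀ := (T.image Prod.snd).max' hTne with hl₀
  obtain ⟨q, hqT, hq2⟩ : ∃ q ∈ T, q.2 = l₀ := by
    have := (T.image Prod.snd).max'_mem hTne
    rw [← hl₀, Finset.mem_image] at this
    obtain ⟨q, hq, hqe⟩ := this
    exact ⟨q, hq, hqe⟩
  have hqS : q ∈ S := (Finset.mem_filter.mp hqT).1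
  have hq1 : q.1 = s₀ := (Finset.mem_filter.mp hqT).2
  have hq : q = (s₀, l₀) := by
    rw [← hq1, ← hq2]
  rw [hq] at hqS
  obtain ⟨hdy, hht, hle, hcov⟩ := (memS (s₀, l₀)).mp hqS
  have smin : ∀ p ∈ S, s₀ ≤ p.1 := fun p hp =>
    Finset.min'_le _ _ (Finset.mem_image_of_mem _ hp)
  have lmax : ∀ p ∈ T, p.2 ≤ l₀ := fun p hp =>
    Finset.le_max' _ _ (Finset.mem_image_of_mem _ hp)
  refine ⟨s₀, l₀, ⟨hdy, ?_⟩, hle, hcov, hht⟩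
  intro s'' l'' hd'' hht'' hle'' hcov''
  have hmem : (s'', l'') ∈ S := (memS (s'', l'')).mpr
    ⟨hd'', by rw [hht'']; exact hht, by omega, by omega⟩
  have h1 : s'' = s₀ := le_antisymm hle'' (smin _ hmem)
  have hmemT : (s'', l'') ∈ T := Finset.mem_filter.mpr ⟨hmem, h1⟩
  have h2 : l'' ≤ l₀ := lmax _ hmemT
  exact ⟨h1, by omega⟩

lemma config_height_len (n : ℕ) (w : Word) (hw : IsConfig n w) :
    height w w.length = 0 := by
  obtain ⟨hlen, hcount⟩ := hw
  have h1 : w.take w.length = w := List.take_length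
  have h2 := count_tf w
  simp only [height, h1]
  omega

lemma cover_dyck (n : ℕ) (w : Word) (hw : IsConfig n w) (j : ℕ) (hj : j < w.length) :
    ∃ s l, IsDyckAt w s l ∧ s ≤ j ∧ j < s + l := by
  have hlen := config_height_len n w hw
  cases hT : w.getD j true with
  | true =>
    rcases le_or_gt 0 (height w j) with hh | hh
    · obtain ⟨l, hP, hl, _⟩ := posCover_true w j hj hT hh hlen
      exact ⟨j, l, Or.inl hP, le_refl _, by omega⟩
    · obtain ⟨s, l, hN, h1, h2, _⟩ := negCover_true w j hj hT hh
      exact ⟨s, l, Or.inr hN, h1, h2⟩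
  | false =>
    rcases le_or_gt (height w j) 0 with hh | hh
    · obtain ⟨l, hN, hl, _⟩ := negCover_false w j hj hT hh hlen
      exact ⟨j, l, Or.inr hN, le_refl _, by omega⟩
    · obtain ⟨s, l, hP, h1, h2, _⟩ := posCover_false w j hj hT hh
      exact ⟨s, l, Or.inl hP, h1, h2⟩

lemma cover_DF (n : ℕ) (w : Word) (hw : IsConfig n w) (j : ℕ) (hj : j < w.length) :
    ∃ d ∈ DF w, d.1 ≤ j ∧ j < d.1 + d.2 := by
  obtain ⟨s, l, hd, h1, h2⟩ := cover_dyck n w hw j hj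
  obtain ⟨s', l', hmax, h3, h4, _⟩ := extend_maximal w s l hd
  exact ⟨(s', l'), mem_DF w s' l' hmax, by omega, by omega⟩

lemma mismatches_cons_cons (a b : Bool) (l : List Bool) :
    mismatches (a :: b :: l) = mismatches (b :: l) + (if a = b then 1 else 0) := by
  simp [mismatches, List.countP_cons]

lemma exists_mismatch (w : Word) (h : mismatches w ≠ 0) :
    ∃ i, i + 1 < w.length ∧ w.getD i true = w.getD (i+1) true := by
  induction w with
  | nil => simp [mismatches] at h
  | cons a l ih =>
    cases l with
    | nil => simp [mismatches] at h
    | cons b l' =>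
      rw [mismatches_cons_cons] at h
      by_cases hab : a = b
      · exact ⟨0, by simp, by simpa using hab⟩
      · simp only [hab, if_false, add_zero] at h
        obtain ⟨i, hi1, hi2⟩ := ih h
        refine ⟨i + 1, by simp at hi1 ⊢; omega, ?_⟩
        simpa [List.getD_cons_succ] using hi2

lemma no_mismatch (w : Word) (h : mismatches w = 0) :
    ∀ i, i + 1 < w.length → w.getD i true ≠ w.getD (i+1) true := by
  induction w with
  | nil => intro i hi; simp at hi
  | cons a l ih =>
    cases l with
    | nil => intro i hi; simp at hi
    | cons b l' =>
      rw [mismatches_cons_cons] at h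
      have h1 : mismatches (b :: l') = 0 := by omega
      have h2 : a ≠ b := by
        intro hab; simp [hab] at h
      intro i hi
      cases i with
      | zero => simpa using h2
      | succ i =>
        have := ih h1 i (by simp at hi ⊢; omega)
        simpa [List.getD_cons_succ] using this

lemma count_take_sum (w : Word) (m : ℕ) (hm : m ≤ w.length) :
    (w.take m).count true = ∑ k ∈ Finset.range m, (if w.getD k true then 1 else 0) := by
  induction m with
  | zero => simp
  | succ m ih =>
    rw [Finset.sum_range_succ, ← ih (by omega)]
    have hm' : m < w.length := by omega
    have h1 : w.take (m+1) = w.take m ++ (w[m]?).toList := List.take_succ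
    have h2 : w[m]? = some w[m] := List.getElem?_eq_getElem hm'
    have h3 : w.getD m true = w[m] := by simp [List.getD_eq_getElem?_getD, h2]
    rw [h2] at h1
    rw [h1, h3, List.count_append]
    cases h : w[m] <;> simp [h]

lemma count_factor_sum (w : Word) (s l : ℕ) (h : s + l ≤ w.length) :
    (factor w s l).count true
      = ∑ k ∈ Finset.Ico s (s + l), (if w.getD k true then 1 else 0) := by
  have h1 := count_take_factor w true s l
  have h2 := count_take_sum w (s + l) h
  have h3 := count_take_sum w s (by omega)
  have h4 : (Finset.range s) ∪ (Finset.Ico s (s+l)) = Finset.range (s + l) := by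
    simp only [Finset.range_eq_Ico]
    exact Finset.Ico_union_Ico_eq_Ico (by omega) (by omega)
  have h5 : Disjoint (Finset.range s) (Finset.Ico s (s+l)) := by
    rw [Finset.range_eq_Ico]
    exact Finset.Ico_disjoint_Ico_consecutive 0 s (s+l)
  have h6 : ∑ k ∈ Finset.range (s+l), (if w.getD k true then (1:ℕ) else 0)
      = (∑ k ∈ Finset.range s, if w.getD k true then (1:ℕ) else 0)
        + ∑ k ∈ Finset.Ico s (s+l), (if w.getD k true then (1:ℕ) else 0) := by
    rw [← h4]
    exact Finset.sum_union h5
  have h7 : (factor w s l).count true = ((w.drop s).take l).count true := rfl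
  omega

lemma sum_biUnion_le' {ι : Type*} (s : Finset ι) (t : ι → Finset ℕ) (g : ℕ → ℕ) :
    ∑ x ∈ s.biUnion t, g x ≤ ∑ i ∈ s, ∑ x ∈ t i, g x := by
  classical
  induction s using Finset.induction_on with
  | empty => simp
  | insert a s ha ih =>
    rw [Finset.biUnion_insert, Finset.sum_insert ha]
    have h1 := Finset.sum_union_inter (s₁ := t a) (s₂ := s.biUnion t) (f := g)
    omega

lemma DF_isMax (w : Word) (d : ℕ × ℕ) (hd : d ∈ DF w) : IsMaxDyckAt w d.1 d.2 :=
  (Finset.mem_filter.mp hd).2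

lemma DF_sum_ge (n : ℕ) (w : Word) (hw : IsConfig n w) :
    n ≤ ∑ d ∈ DF w, (factor w d.1 d.2).count true := by
  classical
  have hn : n = ∑ k ∈ Finset.range w.length, (if w.getD k true then 1 else 0) := by
    have h1 := count_take_sum w w.length (le_refl _)
    rw [List.take_length] at h1
    rw [← h1, hw.2]
  have hsub : Finset.range w.length ⊆
      (DF w).biUnion (fun d => Finset.Ico d.1 (d.1 + d.2)) := by
    intro k hk
    rw [Finset.mem_range] at hk
    obtain ⟨d, hd, h1, h2⟩ := cover_DF n w hw k hk
    exact Finset.mem_biUnion.mpr ⟨d, hd, Finset.mem_Ico.mpr ⟨h1, h2⟩⟩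
  have h2 : ∑ k ∈ Finset.range w.length, (if w.getD k true then 1 else 0)
      ≤ ∑ k ∈ (DF w).biUnion (fun d => Finset.Ico d.1 (d.1 + d.2)),
          (if w.getD k true then 1 else 0) :=
    Finset.sum_le_sum_of_subset hsub
  have h3 := sum_biUnion_le' (DF w) (fun d => Finset.Ico d.1 (d.1 + d.2))
    (fun k => if w.getD k true then 1 else 0)
  have h4 : ∀ d ∈ DF w, ∑ k ∈ Finset.Ico d.1 (d.1 + d.2), (if w.getD k true then (1:ℕ) else 0)
      = (factor w d.1 d.2).count true := by
    intro d hd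
    exact (count_factor_sum w d.1 d.2 (dyck_bounds w d.1 d.2 (DF_isMax w d hd).1).2).symm
  rw [Finset.sum_congr rfl h4] at h3
  omega

lemma factor_length (w : Word) (s l : ℕ) (h : s + l ≤ w.length) :
    (factor w s l).length = l := by
  simp [factor]
  omega

lemma DF_count_pos (w : Word) (d : ℕ × ℕ) (hd : d ∈ DF w) :
    1 ≤ (factor w d.1 d.2).count true := by
  have hdy := (DF_isMax w d hd).1
  obtain ⟨hl, hsl⟩ := dyck_bounds w d.1 d.2 hdy
  have hlen := factor_length w d.1 d.2 hsl
  have htf := count_tf (factor w d.1 d.2)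
  have hbal : (factor w d.1 d.2).count true = (factor w d.1 d.2).count false := by
    rcases hdy with h | h
    · exact h.2.2.1
    · exact h.2.2.1
  omega

lemma two_le_card_DF (n : ℕ) (w : Word) (hw : IsConfig n w) (hn : 1 ≤ n)
    (hmm : mismatches w ≠ 0) : 2 ≤ (DF w).card := by
  by_contra hcon
  push_neg at hcon
  have hlen2 : w.length = 2 * n := hw.1
  have hlenpos : 0 < w.length := by omega
  have hlen0 := config_height_len n w hw
  obtain ⟨d, hd, _, _⟩ := cover_DF n w hw 0 hlenpos
  have huniq : ∀ e ∈ DF w, e = d := fun e he =>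
    Finset.card_le_one.mp (by omega) e he d hd
  have hcov : ∀ j, j < w.length → d.1 ≤ j ∧ j < d.1 + d.2 := by
    intro j hj
    obtain ⟨e, he, h1, h2⟩ := cover_DF n w hw j hj
    have := huniq e he
    subst this
    exact ⟨h1, h2⟩
  have hd1 : d.1 = 0 := by
    have := (hcov 0 hlenpos).1; omega
  have hdyck : IsDyckAt w d.1 d.2 := (DF_isMax w d hd).1
  have hbounds := dyck_bounds w d.1 d.2 hdyck
  have hd2 : w.length ≤ d.1 + d.2 := by
    have := (hcov (w.length - 1) (by omega)).2; omega
  -- key: no Dyck factor has nonzero starting height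
  have key : ∀ s l, IsDyckAt w s l → height w s ≠ 0 → False := by
    intro s l hdy hne
    obtain ⟨s', l', hmax, _, _, hh⟩ := extend_maximal w s l hdy
    have heq := huniq (s', l') (mem_DF w s' l' hmax)
    have hs' : s' = d.1 := by rw [← heq]
    rw [hs', hd1] at hh
    rw [height_zero] at hh
    exact hne hh.symm
  obtain ⟨i, hi, hmis⟩ := exists_mismatch w hmm
  have hi1 : i < w.length := by omega
  have hi2 : i + 1 < w.length := hi
  rcases hdyck with hP | hN
  · -- positive whole word: all heights ≥ 0
    have hiff := (isPosDyckAt_iff w d.1 d.2).mp hP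
    have hd10 : height w d.1 = 0 := by rw [hd1, height_zero]
    have hpos : ∀ k, k ≤ w.length → 0 ≤ height w k := by
      intro k hk
      have h := hiff.2.2.2.1 (k - d.1) (by omega)
      have : d.1 + (k - d.1) = k := by omega
      rw [this, hd10] at h
      exact h
    cases hl : w.getD i true with
    | true =>
      have hl' : w.getD (i+1) true = true := by rw [← hmis, hl]
      have hs1 := height_step_true w i hi1 hl
      have hs0 : 0 ≤ height w i := hpos i (by omega)
      obtain ⟨l', hP', _, _⟩ := posCover_true w (i+1) hi2 hl' (by omega) hlen0
      exact key (i+1) l' (Or.inl hP') (by omega)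
    | false =>
      have hl' : w.getD (i+1) true = false := by rw [← hmis, hl]
      have hs1 := height_step_false w i hi1 hl
      have hs2 := height_step_false w (i+1) hi2 hl'
      have hs0 : 0 ≤ height w (i+1+1) := hpos (i+1+1) (by omega)
      obtain ⟨s, l', hP', _, _, hh⟩ := posCover_false w i hi1 hl (by omega)
      exact key s l' (Or.inl hP') (by omega)
  · -- negative whole word: all heights ≤ 0
    have hiff := (isNegDyckAt_iff w d.1 d.2).mp hN
    have hd10 : height w d.1 = 0 := by rw [hd1, height_zero]
    have hneg : ∀ k, k ≤ w.length → height w k ≤ 0 := by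
      intro k hk
      have h := hiff.2.2.2.1 (k - d.1) (by omega)
      have : d.1 + (k - d.1) = k := by omega
      rw [this, hd10] at h
      exact h
    cases hl : w.getD i true with
    | false =>
      have hl' : w.getD (i+1) true = false := by rw [← hmis, hl]
      have hs1 := height_step_false w i hi1 hl
      have hs0 : height w i ≤ 0 := hneg i (by omega)
      obtain ⟨l', hN', _, _⟩ := negCover_false w (i+1) hi2 hl' (by omega) hlen0
      exact key (i+1) l' (Or.inr hN') (by omega)
    | true =>
      have hl' : w.getD (i+1) true = true := by rw [← hmis, hl]
      have hs1 := height_step_true w i hi1 hl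
      have hs2 := height_step_true w (i+1) hi2 hl'
      have hs0 : height w (i+1+1) ≤ 0 := hneg (i+1+1) (by omega)
      obtain ⟨s, l', hN', _, _, hh⟩ := negCover_true w i hi1 hl (by omega)
      exact key s l' (Or.inr hN') (by omega)

lemma rpow_subadd (x y α : ℝ) (hx : 0 ≤ x) (hy : 0 ≤ y) (h0 : 0 ≤ α) (h1 : α ≤ 1) :
    (x + y) ^ α ≤ x ^ α + y ^ α := by
  lift x to NNReal using hx
  lift y to NNReal using hy
  have := NNReal.rpow_add_le_add_rpow x y h0 h1
  exact_mod_cast this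

lemma sum_one_add_rpow_ge (α : ℝ) (h0 : 0 ≤ α) (h1 : α ≤ 1) {ι : Type*} (S : Finset ι)
    (hS : S.Nonempty) : ∀ g : ι → ℝ, (∀ i ∈ S, 1 ≤ g i) →
    (1 + ∑ i ∈ S, g i) ^ α ≤ ∑ i ∈ S, (1 + g i) ^ α := by
  induction hS using Finset.Nonempty.cons_induction with
  | singleton a => intro g hg; simp
  | cons a s ha hs ih =>
    intro g hg
    rw [Finset.sum_cons, Finset.sum_cons]
    have hga : 1 ≤ g a := hg a (Finset.mem_cons_self a s)
    have hsum1 : (0:ℝ) ≤ ∑ i ∈ s, g i :=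
      Finset.sum_nonneg fun i hi => le_trans zero_le_one
        (hg i (Finset.mem_cons_of_mem hi))
    calc (1 + (g a + ∑ i ∈ s, g i)) ^ α = ((1 + g a) + ∑ i ∈ s, g i) ^ α := by
          rw [← add_assoc]
      _ ≤ (1 + g a) ^ α + (∑ i ∈ s, g i) ^ α :=
          rpow_subadd _ _ α (by linarith) hsum1 h0 h1
      _ ≤ (1 + g a) ^ α + (1 + ∑ i ∈ s, g i) ^ α := by
          have := Real.rpow_le_rpow hsum1 (by linarith : ∑ i ∈ s, g i ≤ 1 + ∑ i ∈ s, g i) h0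
          linarith
      _ ≤ (1 + g a) ^ α + ∑ i ∈ s, (1 + g i) ^ α := by
          have := ih g (fun i hi => hg i (Finset.mem_cons_of_mem hi))
          linarith

lemma sum_one_add_rpow_gt (α : ℝ) (h0 : 0 < α) (h1 : α ≤ 1) {ι : Type*} (S : Finset ι)
    (hcard : 2 ≤ S.card) (g : ι → ℝ) (hg : ∀ i ∈ S, 1 ≤ g i) :
    (1 + ∑ i ∈ S, g i) ^ α < ∑ i ∈ S, (1 + g i) ^ α := by
  classical
  obtain ⟨a, ha⟩ : S.Nonempty := Finset.card_pos.mp (by omega)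
  set T := S.erase a with hTdef
  have haT : a ∉ T := Finset.notMem_erase a S
  have hins : S = insert a T := (Finset.insert_erase ha).symm
  have hTne : T.Nonempty := Finset.card_pos.mp
    (by rw [hTdef, Finset.card_erase_of_mem ha]; omega)
  have hgT : ∀ i ∈ T, 1 ≤ g i := fun i hi => hg i (hins ▸ Finset.mem_insert_of_mem hi)
  have hga : 1 ≤ g a := hg a ha
  have hsumT : (0:ℝ) ≤ ∑ i ∈ T, g i :=
    Finset.sum_nonneg fun i hi => le_trans zero_le_one (hgT i hi)
  have hTle := sum_one_add_rpow_ge α h0.le h1 T hTne g hgT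
  rw [hins, Finset.sum_insert haT, Finset.sum_insert haT]
  calc (1 + (g a + ∑ i ∈ T, g i)) ^ α = ((1 + g a) + ∑ i ∈ T, g i) ^ α := by
        rw [← add_assoc]
    _ ≤ (1 + g a) ^ α + (∑ i ∈ T, g i) ^ α :=
        rpow_subadd _ _ α (by linarith) hsumT h0.le h1
    _ < (1 + g a) ^ α + (1 + ∑ i ∈ T, g i) ^ α := by
        have := Real.rpow_lt_rpow hsumT (by linarith : ∑ i ∈ T, g i < 1 + ∑ i ∈ T, g i) h0
        linarith
    _ ≤ (1 + g a) ^ α + ∑ i ∈ T, (1 + g i) ^ α := by linarith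

lemma phi_gt (α : ℝ) (hα : α ∈ Set.Ioo (0 : ℝ) 1) (n : ℕ) (hn : 1 ≤ n) (w : Word)
    (hw : IsConfig n w) (hmm : mismatches w ≠ 0) : (1 + (n : ℝ)) ^ α < phi α w := by
  obtain ⟨h0, h1⟩ := hα
  set g : ℕ × ℕ → ℝ := fun d => ((factor w d.1 d.2).count true : ℝ) with hgdef
  have hg : ∀ d ∈ DF w, 1 ≤ g d := fun d hd => by
    have := DF_count_pos w d hd
    simp only [hgdef]
    exact_mod_cast this
  have hcard := two_le_card_DF n w hw hn hmm
  have hsum : (n : ℝ) ≤ ∑ d ∈ DF w, g d := by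
    have := DF_sum_ge n w hw
    simp only [hgdef]
    push_cast
    exact_mod_cast this
  have hlt := sum_one_add_rpow_gt α h0 h1.le (DF w) hcard g hg
  have hle : (1 + (n:ℝ)) ^ α ≤ (1 + ∑ d ∈ DF w, g d) ^ α := by
    apply Real.rpow_le_rpow (by positivity) (by linarith) h0.le
  calc (1 + (n:ℝ)) ^ α ≤ (1 + ∑ d ∈ DF w, g d) ^ α := hle
    _ < ∑ d ∈ DF w, (1 + g d) ^ α := hlt
    _ = phi α w := rfl

lemma letters_alt (w : Word) (hmm : mismatches w = 0) :
    ∀ k, k < w.length →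
      w.getD k true = (if Even k then w.getD 0 true else !(w.getD 0 true)) := by
  intro k
  induction k with
  | zero => intro _; simp
  | succ k ih =>
    intro hk
    have hk' : k < w.length := by omega
    have hne := no_mismatch w hmm k hk
    have hstep : w.getD (k+1) true = !(w.getD k true) := by
      cases h1 : w.getD k true <;> cases h2 : w.getD (k+1) true <;> simp_all
    rw [hstep, ih hk']
    by_cases he : Even k <;> simp [he, Nat.even_add_one]

lemma heights_alt (w : Word) (hmm : mismatches w = 0) :
    ∀ k, k ≤ w.length → height w k =
      if Even k then 0 else (if w.getD 0 true then 1 else -1) := by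
  intro k
  induction k with
  | zero => intro _; simp [height_zero]
  | succ k ih =>
    intro hk
    have hk' : k < w.length := by omega
    rw [height_step w k hk', ih (by omega), letters_alt w hmm k hk']
    by_cases he : Even k <;> cases ha : w.getD 0 true <;>
      simp [he, Nat.even_add_one] <;> omega

lemma DF_no_mismatch (n : ℕ) (w : Word) (hw : IsConfig n w) (hn : 1 ≤ n)
    (hmm : mismatches w = 0) : DF w = {(0, w.length)} := by
  have hlen2 : w.length = 2 * n := hw.1
  have hlen0 := config_height_len n w hw
  have hh := heights_alt w hmm
  have hwhole : IsDyckAt w 0 w.length := by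
    cases ha : w.getD 0 true
    · right
      rw [isNegDyckAt_iff]
      refine ⟨by omega, by omega, by rw [zero_add, height_zero, hlen0], ?_,
        by rw [height_zero]⟩
      intro i hi
      rw [zero_add, height_zero, hh i (by omega), ha]
      by_cases he : Even i <;> simp [he]
    · left
      rw [isPosDyckAt_iff]
      refine ⟨by omega, by omega, by rw [zero_add, height_zero, hlen0], ?_,
        by rw [height_zero]⟩
      intro i hi
      rw [zero_add, height_zero, hh i (by omega), ha]
      by_cases he : Even i <;> simp [he]
  have hmaxwhole : IsMaxDyckAt w 0 w.length := by
    refine ⟨hwhole, fun s' l' hd' _ hs' hl' => ?_⟩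
    have hb := dyck_bounds w s' l' hd'
    exact ⟨by omega, by omega⟩
  ext d
  simp only [DF, Finset.mem_filter, Finset.mem_product, Finset.mem_range,
    Finset.mem_singleton]
  constructor
  · rintro ⟨⟨_, _⟩, hdy, hmx⟩
    have hb := dyck_bounds w d.1 d.2 hdy
    have hstart : height w d.1 = 0 := by
      by_contra hne
      have hodd : ¬ Even d.1 := by
        intro he
        rw [hh d.1 (by omega)] at hne
        simp [he] at hne
      have hnext : height w (d.1 + 1) = 0 := by
        rw [hh (d.1+1) (by omega)]
        simp [Nat.even_add_one, hodd]
      rcases hdy with hP | hN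
      · have hiff := (isPosDyckAt_iff w d.1 d.2).mp hP
        have h1 := hiff.2.2.2.1 1 hb.1
        have h2 := hiff.2.2.2.2
        rw [hnext] at h1
        omega
      · have hiff := (isNegDyckAt_iff w d.1 d.2).mp hN
        have h1 := hiff.2.2.2.1 1 hb.1
        have h2 := hiff.2.2.2.2
        rw [hnext] at h1
        omega
    have := hmx 0 w.length hwhole (by rw [height_zero, hstart]) (by omega) (by omega)
    have hd1 : d.1 = 0 := this.1.symm
    have hd2 : d.2 = w.length := this.2.symm
    exact Prod.ext_iff.mpr ⟨hd1, hd2⟩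
  · rintro rfl
    exact ⟨⟨by omega, by omega⟩, hmaxwhole⟩

lemma phi_of_no_mismatch (α : ℝ) (n : ℕ) (w : Word) (hw : IsConfig n w) (hn : 1 ≤ n)
    (hmm : mismatches w = 0) : phi α w = (1 + (n:ℝ)) ^ α := by
  rw [phi, DF_no_mismatch n w hw hn hmm, Finset.sum_singleton]
  have hfac : factor w 0 w.length = w := by
    simp [factor]
  rw [hfac, hw.2]

lemma mismatches_alt (b : Bool) : ∀ n, mismatches ((List.replicate n [b, !b]).flatten) = 0 ∧
    mismatches ((!b) :: (List.replicate n [b, !b]).flatten) = 0 := by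
  intro n
  induction n with
  | zero => constructor <;> simp [mismatches]
  | succ n ih =>
    have hflat : (List.replicate (n+1) [b, !b]).flatten
        = b :: (!b) :: (List.replicate n [b, !b]).flatten := by
      simp [List.replicate_succ]
    constructor
    · rw [hflat, mismatches_cons_cons]
      simp [ih.2]
    · rw [hflat, mismatches_cons_cons, mismatches_cons_cons]
      simp [ih.2]

lemma alt_of_no_mismatch : ∀ m (w : Word), w.length = 2 * m → mismatches w = 0 →
    w = (List.replicate m [true, false]).flatten ∨
    w = (List.replicate m [false, true]).flatten := by
  intro m
  induction m with
  | zero =>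
    intro w hl _
    left
    have : w = [] := List.length_eq_zero_iff.mp (by omega)
    simp [this]
  | succ m ih =>
    intro w hl hmm
    match w with
    | [] => simp at hl
    | [a] => simp at hl; omega
    | a :: b :: rest =>
      have hrl : rest.length = 2 * m := by simp at hl; omega
      rw [mismatches_cons_cons] at hmm
      have hab : a ≠ b := by
        intro h; simp [h] at hmm
      have hmmb : mismatches (b :: rest) = 0 := by omega
      have hmmr : mismatches rest = 0 := by
        cases rest with
        | nil => simp [mismatches]
        | cons c rest' =>
          rw [mismatches_cons_cons] at hmmb
          omega
      have hflatT : (List.replicate (m+1) [true, false]).flatten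
          = true :: false :: (List.replicate m [true, false]).flatten := by
        simp [List.replicate_succ]
      have hflatF : (List.replicate (m+1) [false, true]).flatten
          = false :: true :: (List.replicate m [false, true]).flatten := by
        simp [List.replicate_succ]
      rcases ih rest hrl hmmr with hr | hr
      · cases m with
        | zero =>
          simp at hr
          subst hr
          cases a with
          | true =>
            left; rw [hflatT]
            have : b = false := by cases b <;> simp_all
            simp [this]
          | false =>
            right; rw [hflatF]
            have : b = true := by cases b <;> simp_all
            simp [this]
        | succ m' =>
          have hhead : rest.getD 0 true = true := by
            rw [hr]
            simp [List.replicate_succ]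
          have hbne : b ≠ rest.getD 0 true := by
            have hlen : 1 + 1 < (b :: rest).length := by
              simp; omega
            have := no_mismatch (b :: rest) hmmb 0 (by simpa using by omega)
            simpa using this
          have hb : b = false := by
            rw [hhead] at hbne
            cases b <;> simp_all
          have ha : a = true := by
            rw [hb] at hab
            cases a <;> simp_all
          left
          rw [hflatT, ha, hb, hr]
      · cases m with
        | zero =>
          simp at hr
          subst hr
          cases a with
          | true =>
            left; rw [hflatT]
            have : b = false := by cases b <;> simp_all
            simp [this]
          | false =>
            right; rw [hflatF]
            have : b = true := by cases b <;> simp_all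
            simp [this]
        | succ m' =>
          have hhead : rest.getD 0 true = false := by
            rw [hr]
            simp [List.replicate_succ]
          have hbne : b ≠ rest.getD 0 true := by
            have := no_mismatch (b :: rest) hmmb 0 (by simpa using by omega)
            simpa using this
          have hb : b = true := by
            rw [hhead] at hbne
            cases b <;> simp_all
          have ha : a = false := by
            rw [hb] at hab
            cases a <;> simp_all
          right
          rw [hflatF, ha, hb, hr]


/-- the lower bound `(1+n)^α` of the variant is attained exactly at the
mismatch-free configurations, which are exactly the two alternating words
`(12)^n` and `(21)^n`. -/
theorem phi_eq_min_iff (α : ℝ) (hα : α ∈ Set.Ioo (0 : ℝ) 1)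
    (n : ℕ) (hn : 1 ≤ n) (w : Word) (hw : IsConfig n w) :
    (phi α w = (1 + (n : ℝ)) ^ α ↔ mismatches w = 0) ∧
    (mismatches w = 0 ↔
      w = (List.replicate n [true, false]).flatten ∨
      w = (List.replicate n [false, true]).flatten) := by
  constructor
  · constructor
    · intro hphi
      by_contra hmm
      exact (phi_gt α hα n hn w hw hmm).ne' hphi
    · intro hmm
      exact phi_of_no_mismatch α n w hw hn hmm
  · constructor
    · intro hmm
      exact alt_of_no_mismatch n w hw.1 hmm
    · rintro (rfl | rfl)
      · simpa using (mismatches_alt true n).1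
      · simpa using (mismatches_alt false n).1


end Cooling
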